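/- For the KL divergence, the worst-case expectation over the σ-ball admits the dual form: inf_{P : KL(P,P*) ≤ σ} E_P[V] = sup_{η ≥ 0} { −η log(E_{P*}[exp(−V/η)]) − ησ } for any V : S → [0,H], with the convention that at η=0 the objective equals min over the support of P* of V. -/

import Mathlib

open Finset Real Filter Topology

lemma gibbs {S : Type*} [Fintype S] (P Q : S → ℝ)
    (hP0 : ∀ s, 0 ≤ P s) (hP1 : ∑ s, P s = 1)
    (hQ0 : ∀ s, 0 ≤ Q s) (hQ1 : ∑ s, Q s ≤ 1)
    (habs : ∀ s, Q s = 0 → P s = 0) :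
    0 ≤ ∑ s, P s * Real.log (P s / Q s) := by
  have key : ∀ s, P s * Real.log (Q s / P s) ≤ Q s - P s := by
    intro s
    rcases eq_or_lt_of_le (hP0 s) with h0 | hp
    · simp [← h0]; exact hQ0 s
    · have hq : 0 < Q s := by
        rcases eq_or_lt_of_le (hQ0 s) with h0 | h
        · exact absurd (habs s h0.symm) hp.ne'
        · exact h
      have hlog : Real.log (Q s / P s) ≤ Q s / P s - 1 :=
        Real.log_le_sub_one_of_pos (by positivity)
      calc P s * Real.log (Q s / P s) ≤ P s * (Q s / P s - 1) :=
            mul_le_mul_of_nonneg_left hlog (le_of_lt hp)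
        _ = Q s - P s := by field_simp
  have hsum : ∑ s, P s * Real.log (Q s / P s) ≤ 0 := by
    calc ∑ s, P s * Real.log (Q s / P s) ≤ ∑ s, (Q s - P s) := Finset.sum_le_sum (fun s _ => key s)
      _ = (∑ s, Q s) - ∑ s, P s := by rw [Finset.sum_sub_distrib]
      _ ≤ 0 := by rw [hP1]; linarith
  have heq : ∀ s, P s * Real.log (P s / Q s) = -(P s * Real.log (Q s / P s)) := by
    intro s
    rcases eq_or_lt_of_le (hP0 s) with h0 | hp
    · simp [← h0]
    · have hq : 0 < Q s := by
        rcases eq_or_lt_of_le (hQ0 s) with h0 | h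
        · exact absurd (habs s h0.symm) hp.ne'
        · exact h
      rw [Real.log_div hp.ne' hq.ne', Real.log_div hq.ne' hp.ne']; ring
  calc (0:ℝ) ≤ -(∑ s, P s * Real.log (Q s / P s)) := by linarith
    _ = ∑ s, P s * Real.log (P s / Q s) := by rw [← Finset.sum_neg_distrib]; exact Finset.sum_congr rfl (fun s _ => (heq s).symm)

lemma weak_pos {S : Type*} [Fintype S]
    (Pstar P : S → ℝ) (hP0s : ∀ s, 0 ≤ Pstar s) (hP1s : ∑ s, Pstar s = 1)
    (hP0 : ∀ s, 0 ≤ P s) (hP1 : ∑ s, P s = 1)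
    (habs : ∀ s, Pstar s = 0 → P s = 0)
    (σ : ℝ) (hKL : ∑ s, P s * Real.log (P s / Pstar s) ≤ σ)
    (H : ℝ) (V : S → ℝ) (hV : ∀ s, V s ∈ Set.Icc 0 H)
    (η : ℝ) (hη : 0 < η) :
    -η * Real.log (∑ s, Pstar s * Real.exp (-(V s) / η)) - η * σ ≤ ∑ s, P s * V s := by
  set Z : ℝ := ∑ s, Pstar s * Real.exp (-(V s) / η) with hZdef
  have hex : ∃ s, 0 < Pstar s := by
    by_contra h
    push_neg at h
    have : ∀ s, Pstar s = 0 := fun s => le_antisymm (h s) (hP0s s)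
    simp [this] at hP1s
  obtain ⟨s₀, hs₀⟩ := hex
  have hZpos : 0 < Z := by
    apply Finset.sum_pos' (fun s _ => mul_nonneg (hP0s s) (Real.exp_pos _).le)
    exact ⟨s₀, Finset.mem_univ s₀, mul_pos hs₀ (Real.exp_pos _)⟩
  have hZle : Z ≤ 1 := by
    rw [← hP1s]
    apply Finset.sum_le_sum
    intro s _
    have h1 : Real.exp (-(V s) / η) ≤ 1 := by
      rw [Real.exp_le_one_iff]
      have := (hV s).1
      have : -(V s) / η ≤ 0 := by apply div_nonpos_of_nonpos_of_nonneg <;> linarith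
      linarith
    nlinarith [hP0s s]
  -- normalized Q
  set Q : S → ℝ := fun s => Pstar s * Real.exp (-(V s) / η) / Z with hQdef
  have hQ0 : ∀ s, 0 ≤ Q s := fun s => div_nonneg (mul_nonneg (hP0s s) (Real.exp_pos _).le) hZpos.le
  have hQ1 : ∑ s, Q s ≤ 1 := by
    rw [hQdef, ← Finset.sum_div]
    simp [← hZdef, div_self hZpos.ne']
  have habsQ : ∀ s, Q s = 0 → P s = 0 := by
    intro s hq
    apply habs
    by_contra h
    have hp : 0 < Pstar s := lt_of_le_of_ne (hP0s s) (Ne.symm h)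
    have : 0 < Q s := by rw [hQdef]; exact div_pos (mul_pos hp (Real.exp_pos _)) hZpos
    linarith
  have hgibbs := gibbs P Q hP0 hP1 hQ0 hQ1 habsQ
  -- expand the sum
  have hterm : ∀ s, P s * Real.log (P s / Q s)
      = P s * Real.log (P s / Pstar s) + P s * (V s / η) + P s * Real.log Z := by
    intro s
    rcases eq_or_lt_of_le (hP0 s) with h0 | hp
    · simp [← h0]
    · have hps : 0 < Pstar s := by
        rcases eq_or_lt_of_le (hP0s s) with h0 | h
        · exact absurd (habs s h0.symm) hp.ne'
        · exact h
      have harg : P s / Q s = (P s / Pstar s) * Real.exp (V s / η) * Z := by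
        have he : Real.exp (-(V s) / η) = (Real.exp (V s / η))⁻¹ := by
          rw [neg_div, Real.exp_neg]
        rw [hQdef]
        simp only []
        rw [he]
        field_simp
      rw [harg, Real.log_mul (by positivity) hZpos.ne', Real.log_mul (by positivity) (Real.exp_pos _).ne', Real.log_exp]
      ring
  have hexp : ∑ s, P s * Real.log (P s / Q s)
      = (∑ s, P s * Real.log (P s / Pstar s)) + (∑ s, P s * V s) / η + Real.log Z := by
    calc ∑ s, P s * Real.log (P s / Q s)
        = ∑ s, (P s * Real.log (P s / Pstar s) + P s * (V s / η) + P s * Real.log Z) :=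
          Finset.sum_congr rfl (fun s _ => hterm s)
      _ = (∑ s, P s * Real.log (P s / Pstar s)) + (∑ s, P s * (V s / η)) + (∑ s, P s * Real.log Z) := by
          rw [Finset.sum_add_distrib, Finset.sum_add_distrib]
      _ = (∑ s, P s * Real.log (P s / Pstar s)) + (∑ s, P s * V s) / η + Real.log Z := by
          rw [Finset.sum_div, ← Finset.sum_mul, hP1, one_mul]
          congr 1
          · congr 1
            exact Finset.sum_congr rfl (fun s _ => by ring)
  rw [hexp] at hgibbs
  have h1 : -Real.log Z - (∑ s, P s * Real.log (P s / Pstar s)) ≤ (∑ s, P s * V s) / η := by linarith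
  have h2 : -η * Real.log Z - η * (∑ s, P s * Real.log (P s / Pstar s)) ≤ ∑ s, P s * V s := by
    have := mul_le_mul_of_nonneg_left h1 hη.le
    rw [mul_div_cancel₀ _ hη.ne'] at this
    nlinarith
  have h3 : η * (∑ s, P s * Real.log (P s / Pstar s)) ≤ η * σ := mul_le_mul_of_nonneg_left hKL hη.le
  linarith

set_option maxHeartbeats 2000000 in
theorem kl_divergence_dual {S : Type*} [Fintype S] [Nonempty S]
    (Pstar : S → ℝ) (hP0 : ∀ s, 0 ≤ Pstar s) (hP1 : ∑ s, Pstar s = 1)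
    (σ : ℝ) (hσ : 0 < σ) (H : ℝ) (hH : 0 < H)
    (V : S → ℝ) (hV : ∀ s, V s ∈ Set.Icc 0 H) :
    sInf {x : ℝ | ∃ P : S → ℝ, (∀ s, 0 ≤ P s) ∧ (∑ s, P s = 1) ∧
        (∀ s, Pstar s = 0 → P s = 0) ∧
        (∑ s, P s * Real.log (P s / Pstar s) ≤ σ) ∧ x = ∑ s, P s * V s}
      = sSup {x : ℝ | ∃ η : ℝ, 0 ≤ η ∧
          x = if η = 0 then sInf (V '' {s | 0 < Pstar s})
              else -η * Real.log (∑ s, Pstar s * Real.exp (-(V s) / η)) - η * σ} := by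
  set prim := {x : ℝ | ∃ P : S → ℝ, (∀ s, 0 ≤ P s) ∧ (∑ s, P s = 1) ∧
        (∀ s, Pstar s = 0 → P s = 0) ∧
        (∑ s, P s * Real.log (P s / Pstar s) ≤ σ) ∧ x = ∑ s, P s * V s} with hprim
  set dual := {x : ℝ | ∃ η : ℝ, 0 ≤ η ∧
          x = if η = 0 then sInf (V '' {s | 0 < Pstar s})
              else -η * Real.log (∑ s, Pstar s * Real.exp (-(V s) / η)) - η * σ} with hdual
  -- existence of a point in the support
  have hex : ∃ s, 0 < Pstar s := by
    by_contra h
    push_neg at h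
    have h' : ∀ s, Pstar s = 0 := fun s => le_antisymm (h s) (hP0 s)
    simp [h'] at hP1
  obtain ⟨s₀, hs₀⟩ := hex
  set F : Finset S := Finset.univ.filter (fun s => 0 < Pstar s) with hFdef
  have hFne : F.Nonempty := ⟨s₀, by simp [hFdef, hs₀]⟩
  set m : ℝ := F.inf' hFne V with hmdef
  obtain ⟨smin, hsminF, hsmin⟩ := Finset.exists_mem_eq_inf' hFne V
  have hsminPos : 0 < Pstar smin := by simpa [hFdef] using hsminF
  have hm_le : ∀ s, 0 < Pstar s → m ≤ V s := by
    intro s hs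
    exact Finset.inf'_le V (by simp [hFdef, hs])
  have hm_eq : sInf (V '' {s | 0 < Pstar s}) = m := by
    apply IsLeast.csInf_eq
    constructor
    · exact ⟨smin, hsminPos, by rw [hmdef]; exact hsmin.symm⟩
    · rintro y ⟨s, hs, rfl⟩
      exact hm_le s hs
  have hmV : m = V smin := by rw [hmdef]; exact hsmin
  have hm0 : 0 ≤ m := by rw [hmV]; exact (hV smin).1
  have hmH : m ≤ H := by rw [hmV]; exact (hV smin).2
  -- Pstar itself is primal-feasible
  have hPstar_mem : (∑ s, Pstar s * V s) ∈ prim := by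
    refine ⟨Pstar, hP0, hP1, fun s h => h, ?_, rfl⟩
    have : ∀ s, Pstar s * Real.log (Pstar s / Pstar s) = 0 := by
      intro s
      rcases eq_or_lt_of_le (hP0 s) with h0 | h
      · simp [← h0]
      · rw [div_self h.ne']
        simp
    rw [Finset.sum_congr rfl (fun s _ => this s), Finset.sum_const, smul_zero]
    exact hσ.le
  -- weak duality
  have weak : ∀ d ∈ dual, ∀ x ∈ prim, d ≤ x := by
    rintro d ⟨η, hη, rfl⟩ x ⟨P, hP0', hP1', habs, hKL, rfl⟩
    rcases eq_or_lt_of_le hη with h0 | hpos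
    · rw [if_pos h0.symm, hm_eq]
      have key : ∀ s, P s * m ≤ P s * V s := by
        intro s
        rcases eq_or_lt_of_le (hP0' s) with h0' | hp
        · rw [← h0']; ring_nf; exact le_refl _
        · have hps : 0 < Pstar s := by
            rcases eq_or_lt_of_le (hP0 s) with h0'' | h
            · exact absurd (habs s h0''.symm) hp.ne'
            · exact h
          exact mul_le_mul_of_nonneg_left (hm_le s hps) hp.le
      calc m = ∑ s, P s * m := by rw [← Finset.sum_mul, hP1', one_mul]
        _ ≤ ∑ s, P s * V s := Finset.sum_le_sum (fun s _ => key s)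
    · rw [if_neg hpos.ne']
      exact weak_pos Pstar P hP0 hP1 hP0' hP1' habs σ hKL H V hV η hpos
  -- strong duality: a common point
  have hstrong : ∃ x, x ∈ prim ∧ x ∈ dual := by
    classical
    set Z : ℝ → ℝ := fun η => ∑ s, Pstar s * Real.exp (-(V s)/η) with hZdef
    set W : ℝ → ℝ := fun η => ∑ s, Pstar s * Real.exp (-(V s)/η) * V s with hWdef
    set g : ℝ → ℝ := fun η => -(W η)/(η * Z η) - Real.log (Z η) with hgdef
    have hZpos : ∀ η, 0 < Z η := by
      intro η
      apply Finset.sum_pos' (fun s _ => mul_nonneg (hP0 s) (Real.exp_pos _).le)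
      exact ⟨s₀, Finset.mem_univ s₀, mul_pos hs₀ (Real.exp_pos _)⟩
    have hWnn : ∀ η, 0 ≤ W η :=
      fun η => Finset.sum_nonneg (fun s _ =>
        mul_nonneg (mul_nonneg (hP0 s) (Real.exp_pos _).le) (hV s).1)
    have hZlb : ∀ η, 0 < η → Real.exp (-H/η) ≤ Z η := by
      intro η hη
      calc Real.exp (-H/η) = ∑ s, Pstar s * Real.exp (-H/η) := by
            rw [← Finset.sum_mul, hP1, one_mul]
        _ ≤ Z η := by
            apply Finset.sum_le_sum
            intro s _
            apply mul_le_mul_of_nonneg_left _ (hP0 s)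
            apply Real.exp_le_exp.mpr
            have := (hV s).2
            gcongr
    have hg_ub : ∀ η, 0 < η → g η ≤ H/η := by
      intro η hη
      have h1 : -(W η)/(η * Z η) ≤ 0 :=
        div_nonpos_of_nonpos_of_nonneg (neg_nonpos_of_nonneg (hWnn η))
          (mul_nonneg hη.le (hZpos η).le)
      have h2 : -H/η ≤ Real.log (Z η) := by
        have := Real.log_le_log (Real.exp_pos (-H/η)) (hZlb η hη)
        rwa [Real.log_exp] at this
      have h3 : g η = -(W η)/(η * Z η) - Real.log (Z η) := rfl
      rw [h3]
      have : -Real.log (Z η) ≤ H/η := by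
        have hne : -(-H/η) = H/η := by ring
        linarith [neg_le_neg h2]
      linarith
    have hcont : ContinuousOn g (Set.Ioi (0:ℝ)) := by
      have hterm : ∀ s : S, ContinuousOn (fun η : ℝ => Pstar s * Real.exp (-(V s)/η)) (Set.Ioi (0:ℝ)) := by
        intro s
        apply ContinuousOn.mul continuousOn_const
        apply Real.continuous_exp.comp_continuousOn
        exact ContinuousOn.div continuousOn_const continuousOn_id (fun x hx => ne_of_gt hx)
      have hZcont : ContinuousOn Z (Set.Ioi (0:ℝ)) := by
        rw [hZdef]
        exact continuousOn_finset_sum _ (fun s _ => hterm s)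
      have hWcont : ContinuousOn W (Set.Ioi (0:ℝ)) := by
        rw [hWdef]
        exact continuousOn_finset_sum _ (fun s _ => (hterm s).mul continuousOn_const)
      rw [hgdef]
      apply ContinuousOn.sub
      · exact ContinuousOn.div hWcont.neg (continuousOn_id.mul hZcont)
          (fun x hx => (mul_pos hx (hZpos x)).ne')
      · exact hZcont.log (fun x hx => (hZpos x).ne')
    by_cases hcase : ∃ η, 0 < η ∧ σ ≤ g η
    · -- Case A: IVT yields η with g η = σ
      obtain ⟨η₀, hη₀, hgη₀⟩ := hcase
      set η₁ : ℝ := max η₀ (H/σ) + 1 with hη₁def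
      have hle01 : η₀ ≤ η₁ := le_trans (le_max_left _ _) (by rw [hη₁def]; linarith)
      have hη₁pos : 0 < η₁ := lt_of_lt_of_le hη₀ hle01
      have hgη₁ : g η₁ ≤ σ := by
        refine le_trans (hg_ub η₁ hη₁pos) ?_
        rw [div_le_iff₀ hη₁pos]
        have h1 : H/σ ≤ max η₀ (H/σ) := le_max_right _ _
        have h2 : H/σ < η₁ := by rw [hη₁def]; linarith
        calc H = σ * (H/σ) := by field_simp
          _ ≤ σ * η₁ := by nlinarith
      have hsub : Set.Icc η₀ η₁ ⊆ Set.Ioi (0:ℝ) := fun x hx => lt_of_lt_of_le hη₀ hx.1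
      obtain ⟨η, hηmem, hgη⟩ := intermediate_value_Icc' hle01 (hcont.mono hsub) ⟨hgη₁, hgη₀⟩
      have hηpos : 0 < η := lt_of_lt_of_le hη₀ hηmem.1
      set P : S → ℝ := fun s => Pstar s * Real.exp (-(V s)/η) / Z η with hPdef
      have hPnn : ∀ s, 0 ≤ P s :=
        fun s => div_nonneg (mul_nonneg (hP0 s) (Real.exp_pos _).le) (hZpos η).le
      have hsumP : ∑ s, P s = 1 := by
        rw [hPdef]
        simp only []
        rw [← Finset.sum_div]
        exact div_self (hZpos η).ne'
      have habsP : ∀ s, Pstar s = 0 → P s = 0 := by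
        intro s h
        rw [hPdef]
        simp [h]
      have hterm : ∀ s, P s * Real.log (P s / Pstar s)
          = (-(1/(η * Z η))) * (Pstar s * Real.exp (-(V s)/η) * V s)
            + (-(Real.log (Z η))) * P s := by
        intro s
        rcases eq_or_lt_of_le (hP0 s) with h0 | hps
        · rw [hPdef]
          simp [← h0]
        · have hPs : P s = Pstar s * Real.exp (-(V s)/η) / Z η := rfl
          have harg : P s / Pstar s = Real.exp (-(V s)/η) / Z η := by
            rw [hPs]
            field_simp [hps.ne']
          rw [harg, Real.log_div (Real.exp_ne_zero _) (hZpos η).ne', Real.log_exp, hPs]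
          field_simp [hps.ne', (hZpos η).ne', hηpos.ne']
          ring
      have hKLP : ∑ s, P s * Real.log (P s / Pstar s) = g η := by
        rw [Finset.sum_congr rfl (fun s _ => hterm s), Finset.sum_add_distrib,
          ← Finset.mul_sum, ← Finset.mul_sum, hsumP, mul_one]
        have hWeq : ∑ s, Pstar s * Real.exp (-(V s)/η) * V s = W η := rfl
        rw [hWeq]
        have : g η = -(W η)/(η * Z η) - Real.log (Z η) := rfl
        rw [this]
        ring
      have hvalP : ∑ s, P s * V s = -η * Real.log (Z η) - η * σ := by
        have h1 : ∑ s, P s * V s = W η / Z η := by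
          rw [hWdef]
          simp only []
          rw [Finset.sum_div]
          apply Finset.sum_congr rfl
          intro s _
          rw [hPdef]
          simp only []
          ring
        rw [h1]
        have h2 : -(W η)/(η * Z η) - Real.log (Z η) = σ := hgη
        have hZne := (hZpos η).ne'
        have hηne := hηpos.ne'
        field_simp
        have h3 : -(W η) = (σ + Real.log (Z η)) * (η * Z η) := by
          rw [← h2]
          field_simp
          ring
        linear_combination -h3
      refine ⟨-η * Real.log (Z η) - η * σ,
        ⟨P, hPnn, hsumP, habsP, by rw [hKLP, hgη], hvalP.symm⟩,
        ⟨η, hηpos.le, by rw [if_neg hηpos.ne']⟩⟩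
    · -- Case B
      push_neg at hcase
      set A : Finset S := Finset.univ.filter (fun s => 0 < Pstar s ∧ V s = m) with hAdef
      have hsminA : smin ∈ A := by
        rw [hAdef]
        simp only [Finset.mem_filter, Finset.mem_univ, true_and]
        exact ⟨hsminPos, hmV.symm⟩
      set p : ℝ := ∑ s ∈ A, Pstar s with hpdef
      have hppos : 0 < p :=
        Finset.sum_pos' (fun s _ => hP0 s) ⟨smin, hsminA, hsminPos⟩
      have hple1 : p ≤ 1 := by
        rw [hpdef, ← hP1]
        exact Finset.sum_le_sum_of_subset_of_nonneg (Finset.subset_univ A)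
          (fun s _ _ => hP0 s)
      have hAexp : ∀ η : ℝ, ∑ s ∈ A, Pstar s * Real.exp (-(V s)/η)
          = Real.exp (-m/η) * p := by
        intro η
        have : ∀ s ∈ A, Pstar s * Real.exp (-(V s)/η) = Pstar s * Real.exp (-m/η) := by
          intro s hs
          rw [hAdef] at hs
          simp only [Finset.mem_filter, Finset.mem_univ, true_and] at hs
          rw [hs.2]
        rw [Finset.sum_congr rfl this, ← Finset.sum_mul, ← hpdef, mul_comm]
      have hlogp : -Real.log p ≤ σ := by
        set B : Finset S := Finset.univ.filter (fun s => 0 < Pstar s ∧ V s ≠ m) with hBdef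
        rcases B.eq_empty_or_nonempty with hBe | hBne
        · -- B empty, p = 1
          have hp1 : p = 1 := by
            rw [hpdef, ← hP1]
            apply Finset.sum_subset (Finset.subset_univ A)
            intro s _ hsA
            by_contra h
            have hps : 0 < Pstar s := lt_of_le_of_ne (hP0 s) (Ne.symm h)
            rcases eq_or_ne (V s) m with hv | hv
            · apply hsA
              rw [hAdef]
              simp only [Finset.mem_filter, Finset.mem_univ, true_and]
              exact ⟨hps, hv⟩
            · have hmem : s ∈ B := by
                rw [hBdef]
                simp only [Finset.mem_filter, Finset.mem_univ, true_and]
                exact ⟨hps, hv⟩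
              rw [hBe] at hmem
              exact absurd hmem (Finset.notMem_empty s)
          rw [hp1, Real.log_one]
          linarith
        · set δ : ℝ := B.inf' hBne (fun s => V s - m) with hδdef
          have hδpos : 0 < δ := by
            rw [hδdef, Finset.lt_inf'_iff]
            intro b hb
            rw [hBdef] at hb
            simp only [Finset.mem_filter, Finset.mem_univ, true_and] at hb
            have h1 := hm_le b hb.1
            rcases lt_or_eq_of_le h1 with h | h
            · linarith
            · exact absurd h.symm hb.2
          -- lower bound on g
          have hlb : ∀ η, 0 < η →
              -H * Real.exp (-δ/η)/(p*η) - Real.log (p + Real.exp (-δ/η)) ≤ g η := by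
            intro η hη
            have hAcUB : ∀ C : ℝ, 0 ≤ C → (∀ s ∈ Aᶜ, 0 < Pstar s → m + δ ≤ V s) →
                True := fun _ _ _ => trivial
            have hVlb : ∀ s, s ∉ A → 0 < Pstar s → m + δ ≤ V s := by
              intro s hsA hps
              have hsB : s ∈ B := by
                rw [hBdef]
                simp only [Finset.mem_filter, Finset.mem_univ, true_and]
                refine ⟨hps, ?_⟩
                intro hv
                apply hsA
                rw [hAdef]
                simp only [Finset.mem_filter, Finset.mem_univ, true_and]
                exact ⟨hps, hv⟩
              have := Finset.inf'_le (fun s => V s - m) hsB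
              rw [← hδdef] at this
              linarith
            have hsumAc : ∑ s ∈ Aᶜ, Pstar s ≤ 1 := by
              rw [← hP1]
              exact Finset.sum_le_sum_of_subset_of_nonneg (Finset.subset_univ _)
                (fun s _ _ => hP0 s)
            have hexp2 : Real.exp (-(m+δ)/η) = Real.exp (-m/η) * Real.exp (-δ/η) := by
              rw [← Real.exp_add]
              congr 1
              field_simp
              ring
            have hZub : Z η ≤ Real.exp (-m/η) * (p + Real.exp (-δ/η)) := by
              have hsplit : Z η = (∑ s ∈ A, Pstar s * Real.exp (-(V s)/η))
                  + ∑ s ∈ Aᶜ, Pstar s * Real.exp (-(V s)/η) :=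
                (Finset.sum_add_sum_compl A _).symm
              have hAc : ∑ s ∈ Aᶜ, Pstar s * Real.exp (-(V s)/η)
                  ≤ Real.exp (-(m+δ)/η) := by
                calc ∑ s ∈ Aᶜ, Pstar s * Real.exp (-(V s)/η)
                    ≤ ∑ s ∈ Aᶜ, Pstar s * Real.exp (-(m+δ)/η) := by
                      apply Finset.sum_le_sum
                      intro s hs
                      rcases eq_or_lt_of_le (hP0 s) with h0 | hps
                      · rw [← h0]; simp
                      · apply mul_le_mul_of_nonneg_left _ (hP0 s)
                        apply Real.exp_le_exp.mpr
                        have := hVlb s (Finset.mem_compl.mp hs) hps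
                        gcongr
                  _ = (∑ s ∈ Aᶜ, Pstar s) * Real.exp (-(m+δ)/η) := by
                      rw [Finset.sum_mul]
                  _ ≤ 1 * Real.exp (-(m+δ)/η) :=
                      mul_le_mul_of_nonneg_right hsumAc (Real.exp_pos _).le
                  _ = Real.exp (-(m+δ)/η) := one_mul _
              rw [hsplit, hAexp η]
              rw [hexp2] at hAc
              nlinarith [Real.exp_pos (-m/η), Real.exp_pos (-δ/η)]
            have hZlb2 : p * Real.exp (-m/η) ≤ Z η := by
              have h1 : p * Real.exp (-m/η) = ∑ s ∈ A, Pstar s * Real.exp (-(V s)/η) := by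
                rw [hAexp η, mul_comm]
              rw [h1]
              exact Finset.sum_le_sum_of_subset_of_nonneg (Finset.subset_univ A)
                (fun s _ _ => mul_nonneg (hP0 s) (Real.exp_pos _).le)
            have hWub : W η ≤ Real.exp (-m/η) * (p * m + Real.exp (-δ/η) * H) := by
              have hsplit : W η = (∑ s ∈ A, Pstar s * Real.exp (-(V s)/η) * V s)
                  + ∑ s ∈ Aᶜ, Pstar s * Real.exp (-(V s)/η) * V s :=
                (Finset.sum_add_sum_compl A _).symm
              have hA' : ∑ s ∈ A, Pstar s * Real.exp (-(V s)/η) * V s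
                  = Real.exp (-m/η) * (p * m) := by
                have : ∀ s ∈ A, Pstar s * Real.exp (-(V s)/η) * V s
                    = Pstar s * Real.exp (-m/η) * m := by
                  intro s hs
                  rw [hAdef] at hs
                  simp only [Finset.mem_filter, Finset.mem_univ, true_and] at hs
                  rw [hs.2]
                rw [Finset.sum_congr rfl this]
                rw [← Finset.sum_mul, ← Finset.sum_mul, ← hpdef]
                ring
              have hAc' : ∑ s ∈ Aᶜ, Pstar s * Real.exp (-(V s)/η) * V s
                  ≤ Real.exp (-(m+δ)/η) * H := by
                calc ∑ s ∈ Aᶜ, Pstar s * Real.exp (-(V s)/η) * V s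
                    ≤ ∑ s ∈ Aᶜ, Pstar s * (Real.exp (-(m+δ)/η) * H) := by
                      apply Finset.sum_le_sum
                      intro s hs
                      rcases eq_or_lt_of_le (hP0 s) with h0 | hps
                      · rw [← h0]; simp
                      · have hVs := hVlb s (Finset.mem_compl.mp hs) hps
                        have he : Real.exp (-(V s)/η) ≤ Real.exp (-(m+δ)/η) := by
                          apply Real.exp_le_exp.mpr
                          gcongr
                        have step : Real.exp (-(V s)/η) * V s ≤ Real.exp (-(m+δ)/η) * H :=
                          mul_le_mul he (hV s).2 (hV s).1 (Real.exp_pos _).le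
                        calc Pstar s * Real.exp (-(V s)/η) * V s
                            = Pstar s * (Real.exp (-(V s)/η) * V s) := by ring
                          _ ≤ Pstar s * (Real.exp (-(m+δ)/η) * H) :=
                            mul_le_mul_of_nonneg_left step hps.le
                  _ = (∑ s ∈ Aᶜ, Pstar s) * (Real.exp (-(m+δ)/η) * H) := by
                      rw [Finset.sum_mul]
                  _ ≤ 1 * (Real.exp (-(m+δ)/η) * H) := by
                      apply mul_le_mul_of_nonneg_right hsumAc
                      exact mul_nonneg (Real.exp_pos _).le hH.le
                  _ = Real.exp (-(m+δ)/η) * H := one_mul _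
              rw [hsplit, hA']
              rw [hexp2] at hAc'
              nlinarith [Real.exp_pos (-m/η)]
            -- combine
            have hlogZ : Real.log (Z η) ≤ -m/η + Real.log (p + Real.exp (-δ/η)) := by
              calc Real.log (Z η)
                  ≤ Real.log (Real.exp (-m/η) * (p + Real.exp (-δ/η))) :=
                    Real.log_le_log (hZpos η) hZub
                _ = -m/η + Real.log (p + Real.exp (-δ/η)) := by
                    rw [Real.log_mul (Real.exp_ne_zero _)
                      (by positivity : (0:ℝ) < p + Real.exp (-δ/η)).ne', Real.log_exp]
            have hd : 0 < η * (p * Real.exp (-m/η)) := by positivity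
            have hWdiv : W η / (η * Z η) ≤ m/η + H * Real.exp (-δ/η)/(p*η) := by
              calc W η / (η * Z η)
                  ≤ (Real.exp (-m/η) * (p * m + Real.exp (-δ/η) * H))
                      / (η * (p * Real.exp (-m/η))) := by
                    apply div_le_div₀ _ hWub hd
                    · exact mul_le_mul_of_nonneg_left hZlb2 hη.le
                    · positivity
                _ = m/η + H * Real.exp (-δ/η)/(p*η) := by
                    rw [div_add_div _ _ (by positivity) (by positivity)]
                    rw [div_eq_div_iff (by positivity) (by positivity)]
                    ring
            have hgeq : g η = -(W η)/(η * Z η) - Real.log (Z η) := rfl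
            rw [hgeq]
            have hX : -(m/η + H * Real.exp (-δ/η)/(p*η))
                - (-m/η + Real.log (p + Real.exp (-δ/η)))
                ≤ -(W η) / (η * Z η) - Real.log (Z η) := by
              apply sub_le_sub _ hlogZ
              rw [neg_div (η * Z η) (W η)]
              exact neg_le_neg hWdiv
            calc -H * Real.exp (-δ/η)/(p*η) - Real.log (p + Real.exp (-δ/η))
                = -(m/η + H * Real.exp (-δ/η)/(p*η))
                  - (-m/η + Real.log (p + Real.exp (-δ/η))) := by ring
              _ ≤ -(W η) / (η * Z η) - Real.log (Z η) := hX
          -- the limit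
          have hlim : Tendsto (fun η : ℝ =>
              -H * Real.exp (-δ/η)/(p*η) - Real.log (p + Real.exp (-δ/η)))
              (𝓝[>] 0) (𝓝 (-Real.log p)) := by
            have T1 : Tendsto (fun η : ℝ => Real.exp (-δ/η)) (𝓝[>] 0) (𝓝 0) := by
              have h1 : Tendsto (fun η : ℝ => η⁻¹) (𝓝[>] 0) atTop := tendsto_inv_nhdsGT_zero
              have h2 : Tendsto (fun η : ℝ => δ/η) (𝓝[>] 0) atTop := by
                simpa [div_eq_mul_inv] using h1.const_mul_atTop hδpos
              have h3 : Tendsto (fun η : ℝ => -δ/η) (𝓝[>] 0) atBot := by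
                simpa [neg_div] using tendsto_neg_atBot_iff.mpr h2
              exact Real.tendsto_exp_atBot.comp h3
            have T2 : Tendsto (fun η : ℝ => Real.exp (-δ/η)/η) (𝓝[>] 0) (𝓝 0) := by
              have h1 : Tendsto (fun η : ℝ => η⁻¹) (𝓝[>] 0) atTop := tendsto_inv_nhdsGT_zero
              have h2 : Tendsto (fun η : ℝ => δ/η) (𝓝[>] 0) atTop := by
                simpa [div_eq_mul_inv] using h1.const_mul_atTop hδpos
              have hp' : Tendsto (fun x : ℝ => x ^ 1 * Real.exp (-x)) atTop (𝓝 0) :=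
                tendsto_pow_mul_exp_neg_atTop_nhds_zero 1
              have h4 : Tendsto (fun η : ℝ => (δ/η) * Real.exp (-(δ/η))) (𝓝[>] 0) (𝓝 0) := by
                simpa [Function.comp_def] using hp'.comp h2
              have h5 : Tendsto (fun η : ℝ => δ⁻¹ * ((δ/η) * Real.exp (-(δ/η)))) (𝓝[>] 0) (𝓝 0) := by
                simpa using h4.const_mul δ⁻¹
              apply h5.congr'
              filter_upwards [self_mem_nhdsWithin] with η hη
              rw [neg_div]
              field_simp
            have TL : Tendsto (fun η : ℝ => -H * Real.exp (-δ/η)/(p*η)) (𝓝[>] 0) (𝓝 0) := by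
              have hmul := T2.const_mul (-H/p)
              rw [mul_zero] at hmul
              apply hmul.congr
              intro η
              field_simp
            have TR : Tendsto (fun η : ℝ => Real.log (p + Real.exp (-δ/η)))
                (𝓝[>] 0) (𝓝 (Real.log p)) := by
              have hadd : Tendsto (fun η : ℝ => p + Real.exp (-δ/η)) (𝓝[>] 0) (𝓝 p) := by
                simpa using (tendsto_const_nhds (x := p) (f := 𝓝[>] (0:ℝ))).add T1
              exact (Real.continuousAt_log hppos.ne').tendsto.comp hadd
            simpa using TL.sub TR
          apply le_of_tendsto hlim
          filter_upwards [self_mem_nhdsWithin] with η hη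
          exact le_trans (hlb η hη) (hcase η hη).le
      -- construct the minimizing distribution
      set P : S → ℝ := fun s => if s ∈ A then Pstar s / p else 0 with hPdef
      have hPnn : ∀ s, 0 ≤ P s := by
        intro s
        rw [hPdef]
        by_cases h : s ∈ A
        · simp only [if_pos h]
          exact div_nonneg (hP0 s) hppos.le
        · simp [if_neg h]
      have hsumP : ∑ s, P s = 1 := by
        rw [hPdef]
        simp only []
        rw [Finset.sum_ite_mem, Finset.univ_inter, ← Finset.sum_div, ← hpdef,
          div_self hppos.ne']
      have habsP : ∀ s, Pstar s = 0 → P s = 0 := by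
        intro s h
        rw [hPdef]
        simp only []
        by_cases hs : s ∈ A
        · rw [hAdef] at hs
          simp only [Finset.mem_filter, Finset.mem_univ, true_and] at hs
          rw [h] at hs
          exact absurd hs.1 (lt_irrefl 0)
        · simp [if_neg hs]
      have hval : ∑ s, P s * V s = m := by
        rw [hPdef]
        simp only [ite_mul, zero_mul]
        rw [Finset.sum_ite_mem, Finset.univ_inter]
        have hc : ∀ s ∈ A, Pstar s / p * V s = Pstar s * m / p := by
          intro s hs
          rw [hAdef] at hs
          simp only [Finset.mem_filter, Finset.mem_univ, true_and] at hs
          rw [hs.2]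
          ring
        rw [Finset.sum_congr rfl hc, ← Finset.sum_div, ← Finset.sum_mul, ← hpdef]
        field_simp
      have hKLP : ∑ s, P s * Real.log (P s / Pstar s) = -Real.log p := by
        have hterm2 : ∀ s, P s * Real.log (P s / Pstar s)
            = if s ∈ A then Pstar s * (-Real.log p) / p else 0 := by
          intro s
          rw [hPdef]
          simp only []
          by_cases h : s ∈ A
          · rw [if_pos h, if_pos h]
            have hs' := h
            rw [hAdef] at hs'
            simp only [Finset.mem_filter, Finset.mem_univ, true_and] at hs'
            have hps := hs'.1
            have harg : (Pstar s / p) / Pstar s = p⁻¹ := by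
              rw [div_div, mul_comm p (Pstar s), ← div_div, div_self hps.ne',
                one_div]
            rw [harg, Real.log_inv]
            ring
          · rw [if_neg h, if_neg h, zero_mul]
        rw [Finset.sum_congr rfl (fun s _ => hterm2 s), Finset.sum_ite_mem,
          Finset.univ_inter, ← Finset.sum_div, ← Finset.sum_mul, ← hpdef]
        field_simp
      refine ⟨m, ⟨P, hPnn, hsumP, habsP, by rw [hKLP]; exact hlogp, hval.symm⟩,
        ⟨0, le_refl 0, by rw [if_pos rfl, hm_eq]⟩⟩
  obtain ⟨x, hxp, hxd⟩ := hstrong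
  have hbddP : BddBelow prim := by
    refine ⟨0, ?_⟩
    rintro y ⟨P, hP0', _, _, _, rfl⟩
    exact Finset.sum_nonneg (fun s _ => mul_nonneg (hP0' s) (hV s).1)
  have hbddD : BddAbove dual := ⟨∑ s, Pstar s * V s, fun d hd => weak d hd _ hPstar_mem⟩
  apply le_antisymm
  · exact le_trans (csInf_le hbddP hxp) (le_csSup hbddD hxd)
  · exact csSup_le ⟨x, hxd⟩ (fun d hd => le_csInf ⟨x, hxp⟩ (fun y hy => weak d hd y hy))
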